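/- Let C be a generalized Cartan matrix on a finite nonempty set I and let v : I → ℝ be a configuration. Suppose some legal play from v of length r ends at a configuration u all of whose coordinates are nonnegative. Then every legal play from v has length at most r, and every legal play from v ending at a configuration all of whose coordinates are nonnegative has length exactly r and ends at the same configuration u. (Strong convergence: if the numbers game terminates, then it must terminate in the same number of moves and at the same configuration regardless of how it is played.) -/
import Mathlib


/-- Firing vertex `i`: `v` is replaced by `fun j => v j - C i j * v i`. -/
def fire {I : Type*} (C : I → I → ℤ) (i : I) (v : I → ℝ) : I → ℝ :=
  fun j => v j - (C i j : ℝ) * v i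

/-- The configuration resulting from firing the vertices in the list `l` successively. -/
def playResult {I : Type*} (C : I → I → ℤ) : (I → ℝ) → List I → (I → ℝ)
  | v, [] => v
  | v, i :: l => playResult C (fire C i v) l

/-- `IsPlay C θ v l` : the list `l` is a sequence of successive firings starting at `v`
in which each fired vertex has amplitude strictly less than `θ` at the time it is fired.
With `θ = 0` this is a legal play; with `θ = -1` a `(<-1)`-play. -/
def IsPlay {I : Type*} (C : I → I → ℤ) (θ : ℝ) : (I → ℝ) → List I → Prop
  | _, [] => True
  | v, i :: l => v i < θ ∧ IsPlay C θ (fire C i v) l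

section Helpers

variable {I : Type*}

lemma playResult_append' (C : I → I → ℤ) (v : I → ℝ) (l1 l2 : List I) :
    playResult C v (l1 ++ l2) = playResult C (playResult C v l1) l2 := by
  induction l1 generalizing v with
  | nil => rfl
  | cons i l ih => simp [playResult, ih]

lemma isPlay_append' (C : I → I → ℤ) (θ : ℝ) (v : I → ℝ) (l1 l2 : List I) :
    IsPlay C θ v (l1 ++ l2) ↔ IsPlay C θ v l1 ∧ IsPlay C θ (playResult C v l1) l2 := by
  induction l1 generalizing v with
  | nil => simp [IsPlay, playResult]
  | cons i l ih => simp [IsPlay, playResult, ih, and_assoc]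

/-- If play lengths from `w` are bounded, some play from `w` reaches a nonnegative
configuration (keep firing any negative vertex). -/
lemma greedy' (C : I → I → ℤ) :
    ∀ (N : ℕ) (w : I → ℝ), (∀ g, IsPlay C 0 w g → g.length ≤ N) →
    ∃ g, IsPlay C 0 w g ∧ ∀ j, 0 ≤ playResult C w g j := by
  intro N
  induction N with
  | zero =>
    intro w hb
    by_cases h : ∀ j, 0 ≤ w j
    · exact ⟨[], trivial, h⟩
    · push_neg at h
      obtain ⟨j, hj⟩ := h
      have := hb [j] ⟨by linarith, trivial⟩
      simp at this
  | succ N ih =>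
    intro w hb
    by_cases h : ∀ j, 0 ≤ w j
    · exact ⟨[], trivial, h⟩
    · push_neg at h
      obtain ⟨j, hj⟩ := h
      obtain ⟨g, hg, hgend⟩ := ih (fire C j w) (fun g hg => by
        have := hb (j :: g) ⟨by linarith, hg⟩
        simpa using this)
      exact ⟨j :: g, ⟨by linarith, hg⟩, hgend⟩

/-- Alternating list `[i, j, i, j, ...]` of length `n`. -/
def altList (i j : I) : ℕ → List I
  | 0 => []
  | n + 1 => i :: altList j i n

@[simp] lemma altList_length (i j : I) (n : ℕ) : (altList i j n).length = n := by
  induction n generalizing i j with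
  | zero => rfl
  | succ n ih => simp [altList, ih]

/-- In the hyperbolic rank-2 case (`C i j * C j i ≥ 4`), alternating play goes on
forever: if the vertex `j` about to be fired satisfies the invariant
`0 ≤ v i ∧ v j < 0 ∧ 2 * v i ≤ C j i * v j`, then the alternating play of any length
starting with `j` is legal. -/
lemma alt_play' (C : I → I → ℤ) (hd : ∀ i, C i i = 2) :
    ∀ (n : ℕ) (i j : I) (v : I → ℝ),
      (C i j : ℝ) ≤ -1 → (C j i : ℝ) ≤ -1 → 4 ≤ (C i j : ℝ) * (C j i : ℝ) →
      0 ≤ v i → v j < 0 → 2 * v i ≤ (C j i : ℝ) * v j →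
      IsPlay C 0 v (altList j i n) := by
  intro n
  induction n with
  | zero => intros; trivial
  | succ n ih =>
    intro i j v ha hb hab hvi hvj hinv
    refine ⟨hvj, ?_⟩
    have h1 : fire C j v j = -(v j) := by simp [fire, hd j]; ring
    have h2 : fire C j v i = v i - (C j i : ℝ) * v j := rfl
    have hbv : 0 < (C j i : ℝ) * v j := mul_pos_of_neg_of_neg (by linarith) hvj
    apply ih j i (fire C j v) hb ha (by nlinarith) (by rw [h1]; linarith)
    · rw [h2]; nlinarith
    · rw [h1, h2]
      nlinarith [mul_le_mul_of_nonpos_left hinv (show (C i j : ℝ) ≤ 0 by linarith),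
        mul_le_mul_of_nonneg_right hab (show (0:ℝ) ≤ -(v j) by linarith)]

/-- Polygon for `C i j = C j i = 0`. -/
lemma pairZ' (C : I → I → ℤ) (i j : I) (hii : C i i = 2) (hjj : C j j = 2)
    (hij : C i j = 0) (hji : C j i = 0) (v : I → ℝ) (hi : v i < 0) (hj : v j < 0) :
    IsPlay C 0 v [i, j] ∧ IsPlay C 0 v [j, i] ∧
      playResult C v [i, j] = playResult C v [j, i] := by
  refine ⟨⟨hi, ?_, trivial⟩, ⟨hj, ?_, trivial⟩, ?_⟩
  · show v j - (C i j : ℝ) * v i < 0; rw [hij]; push_cast; linarith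
  · show v i - (C j i : ℝ) * v j < 0; rw [hji]; push_cast; linarith
  · funext k
    simp only [playResult, fire, hij, hji]
    push_cast
    ring

/-- Polygon for the `A₂` case. -/
lemma pairA' (C : I → I → ℤ) (i j : I) (hii : C i i = 2) (hjj : C j j = 2)
    (hij : C i j = -1) (hji : C j i = -1) (v : I → ℝ) (hi : v i < 0) (hj : v j < 0) :
    IsPlay C 0 v [i, j, i] ∧ IsPlay C 0 v [j, i, j] ∧
      playResult C v [i, j, i] = playResult C v [j, i, j] := by
  refine ⟨?_, ?_, ?_⟩
  · simp only [IsPlay, fire, hii, hjj, hij, hji]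
    push_cast
    refine ⟨hi, by linarith, by linarith, trivial⟩
  · simp only [IsPlay, fire, hii, hjj, hij, hji]
    push_cast
    refine ⟨hj, by linarith, by linarith, trivial⟩
  · funext k
    simp only [playResult, fire, hii, hjj, hij, hji]
    push_cast
    ring

/-- Polygon for the `B₂` case. -/
lemma pairB' (C : I → I → ℤ) (i j : I) (hii : C i i = 2) (hjj : C j j = 2)
    (hij : C i j = -1) (hji : C j i = -2) (v : I → ℝ) (hi : v i < 0) (hj : v j < 0) :
    IsPlay C 0 v [i, j, i, j] ∧ IsPlay C 0 v [j, i, j, i] ∧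
      playResult C v [i, j, i, j] = playResult C v [j, i, j, i] := by
  refine ⟨?_, ?_, ?_⟩
  · simp only [IsPlay, fire, hii, hjj, hij, hji]
    push_cast
    refine ⟨hi, by linarith, by linarith, by linarith, trivial⟩
  · simp only [IsPlay, fire, hii, hjj, hij, hji]
    push_cast
    refine ⟨hj, by linarith, by linarith, by linarith, trivial⟩
  · funext k
    simp only [playResult, fire, hii, hjj, hij, hji]
    push_cast
    ring

/-- Polygon for the `G₂` case. -/
lemma pairG' (C : I → I → ℤ) (i j : I) (hii : C i i = 2) (hjj : C j j = 2)
    (hij : C i j = -1) (hji : C j i = -3) (v : I → ℝ) (hi : v i < 0) (hj : v j < 0) :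
    IsPlay C 0 v [i, j, i, j, i, j] ∧ IsPlay C 0 v [j, i, j, i, j, i] ∧
      playResult C v [i, j, i, j, i, j] = playResult C v [j, i, j, i, j, i] := by
  refine ⟨?_, ?_, ?_⟩
  · simp only [IsPlay, fire, hii, hjj, hij, hji]
    push_cast
    refine ⟨hi, by linarith, by linarith, by linarith, by linarith, by linarith, trivial⟩
  · simp only [IsPlay, fire, hii, hjj, hij, hji]
    push_cast
    refine ⟨hj, by linarith, by linarith, by linarith, by linarith, by linarith, trivial⟩
  · funext k
    simp only [playResult, fire, hii, hjj, hij, hji]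
    push_cast
    ring

/-- The polygon property: if `i` and `j` are both fireable at `v` and play lengths from
`fire C i v` are bounded, then there are legal plays starting with `i` and with `j`
respectively, of the same length, reaching the same configuration. -/
lemma polygon' (C : I → I → ℤ) (hdiag : ∀ i, C i i = 2)
    (hoff : ∀ i j, i ≠ j → C i j ≤ 0) (hzero : ∀ i j, C i j = 0 ↔ C j i = 0)
    (i j : I) (hne : i ≠ j) (v : I → ℝ) (hi : v i < 0) (hj : v j < 0) (N : ℕ)
    (hbd : ∀ g, IsPlay C 0 (fire C i v) g → g.length ≤ N) :
    ∃ P Q : List I, IsPlay C 0 v (i :: P) ∧ IsPlay C 0 v (j :: Q) ∧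
      P.length = Q.length ∧ playResult C v (i :: P) = playResult C v (j :: Q) := by
  obtain ⟨a, haij⟩ : ∃ a, C i j = a := ⟨_, rfl⟩
  obtain ⟨b, hbji⟩ : ∃ b, C j i = b := ⟨_, rfl⟩
  have ha0 : a ≤ 0 := haij ▸ hoff i j hne
  have hb0 : b ≤ 0 := hbji ▸ hoff j i (Ne.symm hne)
  by_cases haz : a = 0
  · have hbz : b = 0 := by
      have := (hzero i j).mp (by omega)
      omega
    obtain ⟨h1, h2, h3⟩ := pairZ' C i j (hdiag i) (hdiag j) (haz ▸ haij) (hbz ▸ hbji) v hi hj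
    exact ⟨[j], [i], h1, h2, rfl, h3⟩
  · have hbz : b ≠ 0 := fun h => haz (by have := (hzero j i).mp (by omega); omega)
    have ha1 : a ≤ -1 := by omega
    have hb1 : b ≤ -1 := by omega
    by_cases hab : 4 ≤ a * b
    · exfalso
      set w := fire C i v with hw
      have hwi : w i = -(v i) := by
        show v i - (C i i : ℝ) * v i = -(v i)
        rw [hdiag i]; push_cast; ring
      have hwj : w j = v j - (a : ℝ) * v i := by
        show v j - (C i j : ℝ) * v i = _
        rw [haij]
      have haR : (a : ℝ) ≤ -1 := by exact_mod_cast ha1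
      have hbR : (b : ℝ) ≤ -1 := by exact_mod_cast hb1
      have habR : (4 : ℝ) ≤ (a : ℝ) * (b : ℝ) := by exact_mod_cast hab
      have hav : 0 < (a : ℝ) * v i := mul_pos_of_neg_of_neg (by linarith) hi
      have h1 : 0 ≤ w i := by rw [hwi]; linarith
      have h2 : w j < 0 := by rw [hwj]; linarith
      have h3 : 2 * w i ≤ (C j i : ℝ) * w j := by
        rw [hwi, hwj, hbji]
        nlinarith [mul_pos_of_neg_of_neg (show (b:ℝ) < 0 by linarith) hj,
          mul_le_mul_of_nonneg_right habR (show (0:ℝ) ≤ -(v i) by linarith)]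
      have hplay := alt_play' C hdiag (N + 1) i j w
        (by rw [haij]; exact_mod_cast ha1) (by rw [hbji]; exact_mod_cast hb1)
        (by rw [haij, hbji]; nlinarith) h1 h2 h3
      have := hbd _ hplay
      simp at this
    · push_neg at hab
      have hab1 : 1 ≤ a * b := by nlinarith
      have haub : -a ≤ a * b := by nlinarith
      have hbub : -b ≤ a * b := by nlinarith
      have ha3 : -3 ≤ a := by omega
      have hb3 : -3 ≤ b := by omega
      have hab3 : a * b ≤ 3 := by omega
      have hcases : (a = -1 ∧ b = -1) ∨ (a = -1 ∧ b = -2) ∨ (a = -2 ∧ b = -1) ∨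
          (a = -1 ∧ b = -3) ∨ (a = -3 ∧ b = -1) := by
        interval_cases a <;> interval_cases b <;> omega
      rcases hcases with ⟨ha', hb'⟩ | ⟨ha', hb'⟩ | ⟨ha', hb'⟩ | ⟨ha', hb'⟩ | ⟨ha', hb'⟩ <;>
        subst ha' <;> subst hb'
      · obtain ⟨h1, h2, h3⟩ := pairA' C i j (hdiag i) (hdiag j) haij hbji v hi hj
        exact ⟨_, _, h1, h2, rfl, h3⟩
      · obtain ⟨h1, h2, h3⟩ := pairB' C i j (hdiag i) (hdiag j) haij hbji v hi hj
        exact ⟨_, _, h1, h2, rfl, h3⟩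
      · obtain ⟨h1, h2, h3⟩ := pairB' C j i (hdiag j) (hdiag i) hbji haij v hj hi
        exact ⟨_, _, h2, h1, rfl, h3.symm⟩
      · obtain ⟨h1, h2, h3⟩ := pairG' C i j (hdiag i) (hdiag j) haij hbji v hi hj
        exact ⟨_, _, h1, h2, rfl, h3⟩
      · obtain ⟨h1, h2, h3⟩ := pairG' C j i (hdiag j) (hdiag i) hbji haij v hj hi
        exact ⟨_, _, h2, h1, rfl, h3.symm⟩

/-- Main induction for strong convergence. -/
lemma main_lemma (C : I → I → ℤ) (hdiag : ∀ i, C i i = 2)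
    (hoff : ∀ i j, i ≠ j → C i j ≤ 0) (hzero : ∀ i j, C i j = 0 ↔ C j i = 0) :
    ∀ (r : ℕ) (v : I → ℝ) (p : List I), IsPlay C 0 v p → p.length = r →
      (∀ j, 0 ≤ playResult C v p j) →
      ∀ q, IsPlay C 0 v q → q.length ≤ r ∧
        ((∀ j, 0 ≤ playResult C v q j) →
          q.length = r ∧ playResult C v q = playResult C v p) := by
  intro r
  induction r using Nat.strong_induction_on with
  | _ r ih =>
  intro v p hp hlen hend q hq
  cases q with
  | nil =>
    refine ⟨Nat.zero_le _, fun hqe => ?_⟩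
    cases p with
    | nil => exact ⟨hlen ▸ rfl, rfl⟩
    | cons i p' => exact absurd (hqe i) (not_le.mpr hp.1)
  | cons j q' =>
    obtain ⟨hj, hq'⟩ := hq
    cases p with
    | nil => exact absurd (hend j) (not_le.mpr hj)
    | cons i p' =>
      obtain ⟨hi, hp'⟩ := hp
      have hr : p'.length + 1 = r := by simpa using hlen
      have hend' : ∀ k, 0 ≤ playResult C (fire C i v) p' k := hend
      have ihw := ih p'.length (by omega) (fire C i v) p' hp' rfl hend'
      have claim : ∃ s, IsPlay C 0 (fire C j v) s ∧ s.length = p'.length ∧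
          playResult C (fire C j v) s = playResult C (fire C i v) p' := by
        by_cases hij : i = j
        · subst hij; exact ⟨p', hp', rfl, rfl⟩
        · obtain ⟨P, Q, hP, hQ, hPQlen, hPQ⟩ :=
            polygon' C hdiag hoff hzero i j hij v hi hj p'.length
              (fun g hg => (ihw g hg).1)
          have hPlen : P.length ≤ p'.length := by
            have := (ihw P hP.2).1; omega
          have hboundz : ∀ g, IsPlay C 0 (playResult C (fire C i v) P) g →
              g.length ≤ p'.length - P.length := by
            intro g hg
            have hPg : IsPlay C 0 (fire C i v) (P ++ g) :=
              (isPlay_append' C 0 (fire C i v) P g).mpr ⟨hP.2, hg⟩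
            have := (ihw (P ++ g) hPg).1
            simp at this
            omega
          obtain ⟨g, hg, hgend⟩ := greedy' C _ _ hboundz
          have hPg : IsPlay C 0 (fire C i v) (P ++ g) :=
            (isPlay_append' C 0 (fire C i v) P g).mpr ⟨hP.2, hg⟩
          have hPgend : ∀ k, 0 ≤ playResult C (fire C i v) (P ++ g) k := by
            rw [playResult_append']; exact hgend
          obtain ⟨hlen2, hend2⟩ := (ihw (P ++ g) hPg).2 hPgend
          refine ⟨Q ++ g, ?_, ?_, ?_⟩
          · refine (isPlay_append' C 0 (fire C j v) Q g).mpr ⟨hQ.2, ?_⟩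
            have : playResult C (fire C j v) Q = playResult C (fire C i v) P := hPQ.symm
            rw [this]; exact hg
          · have : P.length + g.length = p'.length := by simpa using hlen2
            simp [← hPQlen]; omega
          · have h1 : playResult C (fire C j v) (Q ++ g) =
                playResult C (fire C i v) (P ++ g) := by
              rw [playResult_append', playResult_append']
              show playResult C (playResult C v (j :: Q)) g =
                playResult C (playResult C v (i :: P)) g
              rw [hPQ]
            rw [h1, hend2]
      obtain ⟨s, hs, hslen, hsend⟩ := claim
      have ihs := ih p'.length (by omega) (fire C j v) s hs hslen
        (by rw [hsend]; exact hend')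
      constructor
      · have := (ihs q' hq').1
        simp; omega
      · intro hqe
        have hqe' : ∀ k, 0 ≤ playResult C (fire C j v) q' k := hqe
        obtain ⟨h1, h2⟩ := (ihs q' hq').2 hqe'
        refine ⟨by simp [h1]; omega, ?_⟩
        show playResult C (fire C j v) q' = playResult C (fire C i v) p'
        rw [h2, hsend]

end Helpers

/-- Strong convergence of the numbers game: if some legal play from `v` terminates at a
nonnegative configuration `u` in `r` moves, then every legal play from `v` has length at
most `r`, and every legal play from `v` ending at a nonnegative configuration has length
exactly `r` and ends at `u`. -/
theorem numbers_game_strong_convergence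
    {I : Type*} [Fintype I] [Nonempty I] (C : I → I → ℤ)
    (hdiag : ∀ i, C i i = 2)
    (hoff : ∀ i j, i ≠ j → C i j ≤ 0)
    (hzero : ∀ i j, C i j = 0 ↔ C j i = 0)
    (v : I → ℝ) (p : List I)
    (hp : IsPlay C 0 v p)
    (hend : ∀ j, 0 ≤ playResult C v p j) :
    (∀ q : List I, IsPlay C 0 v q → q.length ≤ p.length) ∧
    (∀ q : List I, IsPlay C 0 v q → (∀ j, 0 ≤ playResult C v q j) →
      q.length = p.length ∧ playResult C v q = playResult C v p) := by
  have h := main_lemma C hdiag hoff hzero p.length v p hp rfl hend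
  exact ⟨fun q hq => (h q hq).1, fun q hq hqe => (h q hq).2 hqe⟩
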